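/- Let d ≥ 3, H ≥ n ≥ 1, and let Z_1 ∈ ℝ^{H×n}, Z_k ∈ ℝ^{H×H} for 1 < k < d, and Z_d ∈ ℝ^{1×H} be random matrices all of whose entries are independent Gaussian N(0, 1/H) random variables. Then for every t ∈ (0, 1), with probability at least 1 − 2d e^{−H t² / 8}, the product of spectral norms satisfies ∏_{k=1}^d ‖Z_k‖_2 ≥ (1 − t)^{d/2}, and consequently the spectral-norm measure H^{d−1} ∏_{k=1}^d ‖Z_k‖_2 ≥ (1 − t)^{d/2} H^{d−1} grows with the width H as Ω(H^{d−1}). -/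

import Mathlib

open scoped BigOperators

noncomputable section

/-- Dimension of the `k`-th layer of a depth-`d` network with input dimension `n`
and `H` hidden units per layer: `dim 0 = n`, `dim d = 1`, and `H` in between. -/
def dim (n H d : ℕ) : ℕ → ℕ
  | 0 => n
  | (k + 1) => if k + 1 = d then 1 else H

/-- A parameter configuration of a depth-`d` feed-forward network. -/
structure Params (n H d : ℕ) where
  W : ∀ k : Fin d, Matrix (Fin (dim n H d (k + 1))) (Fin (dim n H d k)) ℝ
  b : ∀ k : Fin d, EuclideanSpace ℝ (Fin (dim n H d (k + 1)))

/-- Squared Frobenius norm of a matrix. -/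
def frobSq {p q : ℕ} (A : Matrix (Fin p) (Fin q) ℝ) : ℝ :=
  ∑ i, ∑ j, (A i j) ^ 2

/-- Frobenius norm of a matrix. -/
def frob {p q : ℕ} (A : Matrix (Fin p) (Fin q) ℝ) : ℝ := Real.sqrt (frobSq A)

/-- Spectral norm: operator norm of the associated map between Euclidean spaces. -/
def spec {p q : ℕ} (A : Matrix (Fin p) (Fin q) ℝ) : ℝ :=
  ‖LinearMap.toContinuousLinearMap (Matrix.toEuclideanLin A)‖

/-- `ℓ2` distance between two parameter configurations. -/
def paramDist {n H d : ℕ} (P Q : Params n H d) : ℝ :=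
  Real.sqrt (∑ k : Fin d, (frobSq (P.W k - Q.W k) + ‖P.b k - Q.b k‖ ^ 2))

/-- Coordinatewise ReLU. -/
def relu {p : ℕ} (v : EuclideanSpace ℝ (Fin p)) : EuclideanSpace ℝ (Fin p) :=
  WithLp.toLp 2 (fun i => max (v i) 0)

/-- Layer outputs of the ReLU network. -/
def layer {n H d : ℕ} (P : Params n H d) (x : EuclideanSpace ℝ (Fin n)) :
    (k : ℕ) → k ≤ d → EuclideanSpace ℝ (Fin (dim n H d k))
  | 0, _ => x
  | (k + 1), hk =>
      Matrix.toEuclideanLin (P.W ⟨k, hk⟩) (relu (layer P x k (Nat.le_of_succ_le hk)))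
        + P.b ⟨k, hk⟩

/-- Layer outputs of the linear network (no activation). -/
def linLayer {n H d : ℕ} (P : Params n H d) (x : EuclideanSpace ℝ (Fin n)) :
    (k : ℕ) → k ≤ d → EuclideanSpace ℝ (Fin (dim n H d k))
  | 0, _ => x
  | (k + 1), hk =>
      Matrix.toEuclideanLin (P.W ⟨k, hk⟩) (linLayer P x k (Nat.le_of_succ_le hk))
        + P.b ⟨k, hk⟩

lemma dim_last {n H d : ℕ} (hd : 0 < d) : dim n H d d = 1 := by
  cases d with
  | zero => omega
  | succ k => simp [dim]

/-- Real-valued output of the ReLU network. -/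
def netOut {n H d : ℕ} (hd : 0 < d) (P : Params n H d) (x : EuclideanSpace ℝ (Fin n)) : ℝ :=
  layer P x d le_rfl ⟨0, by rw [dim_last hd]; omega⟩

/-- Real-valued output of the linear network. -/
def linNetOut {n H d : ℕ} (hd : 0 < d) (P : Params n H d) (x : EuclideanSpace ℝ (Fin n)) : ℝ :=
  linLayer P x d le_rfl ⟨0, by rw [dim_last hd]; omega⟩

/-- Expectation over a Rademacher vector `ξ` drawn uniformly from `{-1,1}^m`. -/
def radExp (m : ℕ) (g : (Fin m → ℝ) → ℝ) : ℝ :=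
  (∑ ε : Fin m → Bool, g (fun i => if ε i then 1 else -1)) / 2 ^ m

open MeasureTheory ProbabilityTheory Matrix in
lemma exp_quad_le {u : ℝ} (h0 : 0 ≤ u) (h1 : u ≤ 1) : Real.exp (u - u^2/2) ≤ 1 + u := by
  have hx0 : 0 ≤ u - u^2/2 := by nlinarith
  have hx1 : |u - u^2/2| ≤ 1 := by rw [abs_of_nonneg hx0]; nlinarith
  have hb := Real.exp_bound hx1 (n := 3) (by norm_num)
  rw [abs_of_nonneg hx0] at hb
  have h3 : (∑ i ∈ Finset.range 3, (u - u^2/2) ^ i / i.factorial) = 1 + (u - u^2/2) + (u - u^2/2)^2/2 := by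
    simp [Finset.sum_range_succ, Nat.factorial]
  rw [h3] at hb
  have h4 : ((Nat.succ 3 : ℕ) : ℝ) / ((Nat.factorial 3 : ℕ) * (3:ℕ)) = 2/9 := by
    norm_num [Nat.factorial]
  rw [h4] at hb
  have h2 := (abs_le.mp hb).2
  have e1 : (u - u^2/2)^3 ≤ u^3 := pow_le_pow_left₀ hx0 (by nlinarith) 3
  have e2 : u^4 ≤ u^3 := pow_le_pow_of_le_one h0 h1 (by norm_num)
  have e3 : 0 ≤ u^3 := pow_nonneg h0 3
  nlinarith [e1, e2, e3, h2]

open scoped Matrix.Norms.L2Operator in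
lemma spec_eq_l2 {p q : ℕ} (A : Matrix (Fin p) (Fin q) ℝ) : spec A = ‖A‖ := rfl

open Matrix in
open scoped Matrix.Norms.L2Operator in
lemma spec_transpose {p q : ℕ} (A : Matrix (Fin p) (Fin q) ℝ) : spec Aᵀ = spec A := by
  rw [spec_eq_l2, spec_eq_l2, ← Matrix.l2_opNorm_conjTranspose A,
    Matrix.conjTranspose_eq_transpose_of_trivial]

lemma spec_nonneg' {p q : ℕ} (A : Matrix (Fin p) (Fin q) ℝ) : 0 ≤ spec A := norm_nonneg _

lemma norm_toEuclideanLin_le {p q : ℕ} (A : Matrix (Fin p) (Fin q) ℝ)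
    (x : EuclideanSpace ℝ (Fin q)) : ‖Matrix.toEuclideanLin A x‖ ≤ spec A * ‖x‖ :=
  (LinearMap.toContinuousLinearMap (Matrix.toEuclideanLin A)).le_opNorm x

lemma col_sq_le {p q : ℕ} (A : Matrix (Fin p) (Fin q) ℝ) (j : Fin q) :
    ∑ i, (A i j)^2 ≤ spec A ^ 2 := by
  have h1 := norm_toEuclideanLin_le A (EuclideanSpace.single j (1:ℝ))
  rw [EuclideanSpace.norm_single] at h1
  simp only [norm_one, mul_one] at h1
  have h2 : ∀ i, (Matrix.toEuclideanLin A (EuclideanSpace.single j (1:ℝ))) i = A i j := by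
    intro i
    simp [Matrix.toEuclideanLin_apply, Matrix.mulVec, dotProduct,
      EuclideanSpace.single_apply]
  have h3 : ‖Matrix.toEuclideanLin A (EuclideanSpace.single j (1:ℝ))‖^2 = ∑ i, (A i j)^2 := by
    rw [EuclideanSpace.norm_eq, Real.sq_sqrt (by positivity)]
    exact Finset.sum_congr rfl fun i _ => by rw [h2 i, Real.norm_eq_abs, sq_abs]
  rw [← h3]
  exact pow_le_pow_left₀ (norm_nonneg _) h1 2

lemma frobSq_le_col {p q : ℕ} (A : Matrix (Fin p) (Fin q) ℝ) :
    frobSq A ≤ q * spec A ^ 2 := by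
  rw [frobSq, Finset.sum_comm]
  calc (∑ j : Fin q, ∑ i, (A i j)^2) ≤ ∑ j : Fin q, spec A ^2 :=
        Finset.sum_le_sum fun j _ => col_sq_le A j
    _ = q * spec A ^ 2 := by simp [mul_comm]

open Matrix in
lemma frobSq_transpose {p q : ℕ} (A : Matrix (Fin p) (Fin q) ℝ) :
    frobSq Aᵀ = frobSq A := by
  rw [frobSq, frobSq, Finset.sum_comm]
  rfl

open Matrix in
lemma frobSq_le_min {p q : ℕ} (A : Matrix (Fin p) (Fin q) ℝ) :
    frobSq A ≤ min p q * spec A ^ 2 := by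
  rcases le_total p q with h | h
  · rw [min_eq_left h]
    calc frobSq A = frobSq Aᵀ := (frobSq_transpose A).symm
      _ ≤ p * spec Aᵀ ^ 2 := frobSq_le_col Aᵀ
      _ = p * spec A ^ 2 := by rw [spec_transpose]
  · rw [min_eq_right h]
    exact frobSq_le_col A

open MeasureTheory ProbabilityTheory in
lemma iIndepFun_precomp {Ω ι κ : Type*} [MeasurableSpace Ω] {μ : Measure Ω} {f : ι → Ω → ℝ}
    (h : iIndepFun f μ) {g : κ → ι} (hg : Function.Injective g) :
    iIndepFun (fun j => f (g j)) μ := by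
  classical
  rw [iIndepFun_iff_measure_inter_preimage_eq_mul] at h ⊢
  intro S sets hsets
  set sets' : ι → Set ℝ := fun i =>
    if hi : ∃ j ∈ S, g j = i then sets hi.choose else Set.univ with hsets'
  have hkey : ∀ j ∈ S, sets' (g j) = sets j := by
    intro j hj
    have hi : ∃ j' ∈ S, g j' = g j := ⟨j, hj, rfl⟩
    have hspec := hi.choose_spec
    have hj' : hi.choose = j := hg hspec.2
    simp only [hsets', dif_pos hi, hj']
  have hmeas' : ∀ i, i ∈ S.image g → MeasurableSet (sets' i) := by
    intro i hi
    rcases Finset.mem_image.mp hi with ⟨j, hj, rfl⟩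
    rw [hkey j hj]
    exact hsets j hj
  have h2 := h (S.image g) hmeas'
  have hset : (⋂ i ∈ S.image g, f i ⁻¹' sets' i) = ⋂ j ∈ S, f (g j) ⁻¹' sets j := by
    ext ω
    simp only [Set.mem_iInter, Set.mem_preimage, Finset.mem_image]
    constructor
    · intro hω j hj
      have := hω (g j) ⟨j, hj, rfl⟩
      rwa [hkey j hj] at this
    · rintro hω i ⟨j, hj, rfl⟩
      rw [hkey j hj]
      exact hω j hj
  have hprod : (∏ i ∈ S.image g, μ (f i ⁻¹' sets' i)) = ∏ j ∈ S, μ (f (g j) ⁻¹' sets j) := by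
    rw [Finset.prod_image (fun x _ y _ hxy => hg hxy)]
    exact Finset.prod_congr rfl fun j hj => by rw [hkey j hj]
  rw [hset, hprod] at h2
  exact h2

open MeasureTheory ProbabilityTheory in
lemma iIndepFun_congr' {Ω ι : Type*} [MeasurableSpace Ω] {μ : Measure Ω} {f g : ι → Ω → ℝ}
    (h : iIndepFun f μ) (heq : ∀ i, f i =ᵐ[μ] g i) :
    iIndepFun g μ := by
  rw [iIndepFun_iff_measure_inter_preimage_eq_mul] at h ⊢
  intro S sets hsets
  have h1 : ∀ i, μ (g i ⁻¹' sets i) = μ (f i ⁻¹' sets i) := by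
    intro i
    refine measure_congr (Filter.eventuallyEq_set.mpr ?_)
    filter_upwards [heq i] with ω hω
    simp only [Set.mem_preimage, hω]
  have h2 : μ (⋂ i ∈ S, g i ⁻¹' sets i) = μ (⋂ i ∈ S, f i ⁻¹' sets i) := by
    refine measure_congr (Filter.eventuallyEq_set.mpr ?_)
    have hall : ∀ᵐ ω ∂μ, ∀ i ∈ S, f i ω = g i ω :=
      (Filter.eventually_all_finset S).mpr fun i _ => heq i
    filter_upwards [hall] with ω hω
    simp only [Set.mem_iInter, Set.mem_preimage]
    exact forall₂_congr fun i hi => by rw [hω i hi]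
  rw [h2, h S hsets]
  exact Finset.prod_congr rfl fun i _ => (h1 i).symm

open MeasureTheory ProbabilityTheory Real in
lemma gaussian_mgf_sq {Ω : Type*} [MeasurableSpace Ω] {μ : Measure Ω} {v : NNReal} (hv : v ≠ 0)
    {X : Ω → ℝ} (hX : AEMeasurable X μ) (hmap : μ.map X = gaussianReal 0 v)
    {l : ℝ} (hl : 0 ≤ l) :
    mgf (fun ω => X ω ^ 2) μ (-l) = (Real.sqrt (1 + 2 * l * v))⁻¹ := by
  have hv0 : (0:ℝ) < v := by positivity
  have hb : (0:ℝ) < l + (2 * (v:ℝ))⁻¹ := by positivity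
  set b : ℝ := l + (2 * (v:ℝ))⁻¹ with hbdef
  have h1 : mgf (fun ω => X ω ^ 2) μ (-l) = ∫ x, Real.exp (-l * x ^ 2) ∂(μ.map X) := by
    rw [mgf, integral_map hX (Continuous.aestronglyMeasurable (by continuity))]
  rw [h1, hmap, gaussianReal_of_var_ne_zero 0 hv]
  have h2 : (gaussianPDF 0 v) = fun x => ((Real.toNNReal (gaussianPDFReal 0 v x) : NNReal) : ENNReal) := by
    rfl
  rw [h2]
  rw [integral_withDensity_eq_integral_smul
    ((measurable_gaussianPDFReal 0 v).real_toNNReal) _]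
  have h3 : ∀ x : ℝ, (Real.toNNReal (gaussianPDFReal 0 v x)) • Real.exp (-l * x ^ 2)
      = (Real.sqrt (2 * π * v))⁻¹ * Real.exp (-b * x ^ 2) := by
    intro x
    rw [NNReal.smul_def, smul_eq_mul, Real.coe_toNNReal _ (gaussianPDFReal_nonneg 0 v x)]
    rw [gaussianPDFReal]
    rw [mul_assoc, ← Real.exp_add]
    congr 2
    rw [hbdef]
    ring
  simp_rw [h3]
  rw [integral_const_mul, integral_gaussian]
  rw [← Real.sqrt_inv, ← Real.sqrt_inv, ← Real.sqrt_mul (by positivity)]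
  congr 1
  have hπ := Real.pi_pos
  field_simp
  linear_combination (-1) * mul_inv_cancel₀ hv0.ne'

lemma key_scalar {t : ℝ} (ht0 : 0 < t) (ht1 : t < 1) :
    Real.exp (t/3 * (1-t)) * (Real.sqrt (1 + 2*t/3))⁻¹ ≤ Real.exp (-(t^2)/8) := by
  have hu0 : (0:ℝ) ≤ 2*t/3 := by linarith
  have hu1 : 2*t/3 ≤ 1 := by linarith
  have hq := exp_quad_le hu0 hu1
  have hsq : Real.exp (t/3 * (1-t) + t^2/8) ≤ Real.sqrt (1 + 2*t/3) := by
    rw [Real.le_sqrt (Real.exp_pos _).le]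
    calc Real.exp (t/3 * (1-t) + t^2/8) ^ 2
        = Real.exp (2 * (t/3 * (1-t) + t^2/8)) := by
          rw [← Real.exp_nat_mul]; norm_num [mul_comm]
      _ ≤ Real.exp (2*t/3 - (2*t/3)^2/2) := by
          apply Real.exp_le_exp.mpr; nlinarith
      _ ≤ 1 + 2*t/3 := hq
    linarith
  have hpos : (0:ℝ) < Real.sqrt (1 + 2*t/3) := Real.sqrt_pos.mpr (by linarith)
  rw [mul_inv_le_iff₀ hpos]
  calc Real.exp (t/3 * (1-t)) = Real.exp (-(t^2)/8) * Real.exp (t/3 * (1-t) + t^2/8) := by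
        rw [← Real.exp_add]; ring_nf
    _ ≤ Real.exp (-(t^2)/8) * Real.sqrt (1 + 2*t/3) := by
        exact mul_le_mul_of_nonneg_left hsq (Real.exp_pos _).le

open MeasureTheory ProbabilityTheory in
lemma chernoff_layer {Ω : Type*} [MeasurableSpace Ω] {μ : Measure Ω} [IsProbabilityMeasure μ]
    {ι : Type*} [Fintype ι] {H : ℕ} (hH : 0 < H)
    {X : ι → Ω → ℝ} (hmeas : ∀ i, Measurable (X i))
    (hind : iIndepFun X μ)
    (hmap : ∀ i, μ.map (X i) = gaussianReal 0 (H : NNReal)⁻¹)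
    {t : ℝ} (ht0 : 0 < t) (ht1 : t < 1) :
    μ {ω | ∑ i, X i ω ^ 2 ≤ (1 - t) * Fintype.card ι / H}
      ≤ ENNReal.ofReal (Real.exp (-(Fintype.card ι * t ^ 2) / 8)) := by
  classical
  set m := Fintype.card ι with hm
  set l : ℝ := t * H / 3 with hldef
  have hl0 : 0 ≤ l := by positivity
  set Xsq : ι → Ω → ℝ := fun i ω => X i ω ^ 2 with hXsq
  have hXsqmeas : ∀ i, Measurable (Xsq i) := fun i => (hmeas i).pow_const 2
  have hindsq : iIndepFun Xsq μ :=
    hind.comp (fun _ x => x ^ 2) (fun _ => measurable_id.pow_const 2)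
  set S : Ω → ℝ := fun ω => ∑ i, Xsq i ω with hSdef
  have hSmeas : Measurable S := Finset.measurable_sum _ (fun i _ => hXsqmeas i)
  have hint : Integrable (fun ω => Real.exp (-l * S ω)) μ := by
    refine Integrable.mono' (integrable_const (1:ℝ))
      ((hSmeas.const_mul (-l)).exp.aestronglyMeasurable) ?_
    filter_upwards with ω
    rw [Real.norm_eq_abs, abs_of_pos (Real.exp_pos _), ← Real.exp_zero]
    apply Real.exp_le_exp.mpr
    have : 0 ≤ S ω := Finset.sum_nonneg fun i _ => sq_nonneg _
    nlinarith
  have hchern := measure_le_le_exp_mul_mgf (μ := μ) (X := S)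
    ((1 - t) * m / H) (neg_nonpos.mpr hl0) hint
  have hv : ((H : NNReal))⁻¹ ≠ 0 :=
    inv_ne_zero (Nat.cast_ne_zero.mpr hH.ne')
  have hvco : (((H : NNReal)⁻¹ : NNReal) : ℝ) = (H : ℝ)⁻¹ := by
    push_cast; simp
  have hmgf_each : ∀ i, mgf (Xsq i) μ (-l) = (Real.sqrt (1 + 2*t/3))⁻¹ := by
    intro i
    rw [gaussian_mgf_sq hv (hmeas i).aemeasurable (hmap i) hl0]
    congr 2
    rw [hvco, hldef]
    field_simp
  have hmgfS : mgf S μ (-l) = ((Real.sqrt (1 + 2*t/3))⁻¹) ^ m := by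
    have hfun : S = ∑ i : ι, Xsq i := by
      ext ω; simp [hSdef, Finset.sum_apply]
    rw [hfun, hindsq.mgf_sum hXsqmeas Finset.univ]
    rw [Finset.prod_congr rfl (fun i _ => hmgf_each i), Finset.prod_const,
      Finset.card_univ]
  rw [hmgfS] at hchern
  have hexp : Real.exp (-(-l) * ((1 - t) * m / H)) = (Real.exp (t/3 * (1-t))) ^ m := by
    rw [← Real.exp_nat_mul]
    congr 1
    have : (H:ℝ) ≠ 0 := by positivity
    field_simp
    ring
  rw [hexp, ← mul_pow] at hchern
  have hbound : (Real.exp (t/3 * (1-t)) * (Real.sqrt (1 + 2*t/3))⁻¹) ^ m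
      ≤ Real.exp (-(m * t ^ 2) / 8) := by
    have h1 := key_scalar ht0 ht1
    have h2 : (Real.exp (t/3 * (1-t)) * (Real.sqrt (1 + 2*t/3))⁻¹) ^ m
        ≤ (Real.exp (-(t^2)/8)) ^ m := by
      apply pow_le_pow_left₀ (by positivity) h1
    calc _ ≤ (Real.exp (-(t^2)/8)) ^ m := h2
      _ = Real.exp (-(m * t ^ 2) / 8) := by
          rw [← Real.exp_nat_mul]; congr 1; ring
  have hfinal : (μ {ω | S ω ≤ (1 - t) * m / H}).toReal ≤ Real.exp (-(m * t ^ 2) / 8) :=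
    le_trans hchern hbound
  calc μ {ω | ∑ i, X i ω ^ 2 ≤ (1 - t) * m / H}
      = ENNReal.ofReal ((μ {ω | S ω ≤ (1 - t) * m / H}).toReal) := by
        rw [ENNReal.ofReal_toReal (measure_ne_top _ _)]
    _ ≤ ENNReal.ofReal (Real.exp (-(m * t ^ 2) / 8)) := ENNReal.ofReal_le_ofReal hfinal

lemma dim_facts {n H d : ℕ} (hd : 3 ≤ d) (hn : 1 ≤ n) (hHn : n ≤ H) {k : ℕ} (hk : k < d) :
    dim n H d (k+1) * dim n H d k = H * min (dim n H d (k+1)) (dim n H d k)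
    ∧ H ≤ dim n H d (k+1) * dim n H d k := by
  have hH : 1 ≤ H := le_trans hn hHn
  match k with
  | 0 =>
    have h1 : (0:ℕ)+1 ≠ d := by omega
    simp only [dim, if_neg h1]
    rw [min_eq_right hHn]
    exact ⟨rfl, Nat.le_mul_of_pos_right H hn⟩
  | (j+1) =>
    have hj : j+1 ≠ d := by omega
    by_cases h : j+1+1 = d
    · simp only [dim, if_pos h, if_neg hj]
      rw [min_eq_left hH]
      omega
    · simp only [dim, if_neg h, if_neg hj]
      rw [min_self]
      exact ⟨rfl, Nat.le_mul_of_pos_right H (by omega)⟩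
open MeasureTheory ProbabilityTheory in
/-- for Xavier-initialized weights, the product of spectral norms is
at least `(1-t)^(d/2)` with probability `1 - 2d e^{-Ht²/8}`, so the spectral-norm
measure `H^(d-1) ∏ ‖Z_k‖₂` grows as `Ω(H^(d-1))`. -/
theorem stmt5 {Ω : Type*} [MeasurableSpace Ω] (μ : Measure Ω) [IsProbabilityMeasure μ]
    {n H d : ℕ} (hd : 3 ≤ d) (hn : 1 ≤ n) (hHn : n ≤ H)
    (Z : Ω → Params n H d)
    (hindep : iIndepFun
      (fun (e : Σ k : Fin d, Fin (dim n H d ((k : ℕ) + 1)) × Fin (dim n H d k)) =>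
        fun ω => (Z ω).W e.1 e.2.1 e.2.2) μ)
    (hgauss : ∀ (k : Fin d) i j,
      Measure.map (fun ω => (Z ω).W k i j) μ = gaussianReal 0 ((H : NNReal)⁻¹))
    (t : ℝ) (ht0 : 0 < t) (ht1 : t < 1) :
    ENNReal.ofReal (1 - 2 * d * Real.exp (-((H : ℝ) * t ^ 2) / 8))
      ≤ μ {ω | (1 - t) ^ ((d : ℝ) / 2) ≤ ∏ k, spec ((Z ω).W k) ∧
            (1 - t) ^ ((d : ℝ) / 2) * (H : ℝ) ^ (d - 1)
              ≤ (H : ℝ) ^ (d - 1) * ∏ k, spec ((Z ω).W k)} := by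
  classical
  have hH : 0 < H := lt_of_lt_of_le (by omega : 0 < n) hHn
  have h1t : (0:ℝ) ≤ 1 - t := by linarith
  set A : Set Ω := {ω | (1 - t) ^ ((d : ℝ) / 2) ≤ ∏ k, spec ((Z ω).W k) ∧
            (1 - t) ^ ((d : ℝ) / 2) * (H : ℝ) ^ (d - 1)
              ≤ (H : ℝ) ^ (d - 1) * ∏ k, spec ((Z ω).W k)} with hA
  set Bad : Fin d → Set Ω := fun k => {ω | spec ((Z ω).W k) < Real.sqrt (1 - t)} with hBad
  set e : ℝ := Real.exp (-((H : ℝ) * t ^ 2) / 8) with he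
  have he0 : 0 < e := Real.exp_pos _
  -- each bad event is small
  have hbad : ∀ k : Fin d, μ (Bad k) ≤ ENNReal.ofReal e := by
    intro k
    set p : ℕ := dim n H d ((k:ℕ)+1) with hp
    set q : ℕ := dim n H d (k:ℕ) with hq
    obtain ⟨hdim1, hdim2⟩ := dim_facts hd hn hHn k.isLt
    set X : Fin p × Fin q → Ω → ℝ := fun ij ω => (Z ω).W k ij.1 ij.2 with hX
    have hXae : ∀ ij, AEMeasurable (X ij) μ := by
      intro ij
      by_contra hcon
      have h0 : μ.map (X ij) = 0 := Measure.map_of_not_aemeasurable hcon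
      rw [hgauss k ij.1 ij.2] at h0
      exact (IsProbabilityMeasure.ne_zero _) h0
    set X' : Fin p × Fin q → Ω → ℝ := fun ij => (hXae ij).mk _ with hX'
    have hX'meas : ∀ ij, Measurable (X' ij) := fun ij => (hXae ij).measurable_mk
    have heqX : ∀ ij, X ij =ᵐ[μ] X' ij := fun ij => (hXae ij).ae_eq_mk
    have hind0 : iIndepFun X μ :=
      iIndepFun_precomp hindep
        (g := Sigma.mk k) sigma_mk_injective
    have hind' : iIndepFun X' μ := iIndepFun_congr' hind0 heqX
    have hmap' : ∀ ij, μ.map (X' ij) = gaussianReal 0 (H : NNReal)⁻¹ := by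
      intro ij
      rw [← Measure.map_congr (heqX ij)]
      exact hgauss k ij.1 ij.2
    have hch := chernoff_layer (μ := μ) hH hX'meas hind' hmap' ht0 ht1
    have hcard : (Fintype.card (Fin p × Fin q) : ℝ) = (H : ℝ) * min p q := by
      rw [Fintype.card_prod, Fintype.card_fin, Fintype.card_fin]
      rw [hdim1]
      push_cast [Nat.cast_min]
      ring
    have hsub : Bad k ⊆ {ω | ∑ ij : Fin p × Fin q, X ij ω ^ 2
        ≤ (1 - t) * Fintype.card (Fin p × Fin q) / H} := by
      intro ω hω
      have hspec : spec ((Z ω).W k) < Real.sqrt (1 - t) := hω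
      have hspec2 : spec ((Z ω).W k) ^ 2 ≤ 1 - t := by
        have := pow_le_pow_left₀ (spec_nonneg' _) hspec.le 2
        rwa [Real.sq_sqrt h1t] at this
      have hfr : (∑ ij : Fin p × Fin q, X ij ω ^ 2) = frobSq ((Z ω).W k) := by
        rw [frobSq]
        exact Fintype.sum_prod_type (f := fun ij : Fin p × Fin q => X ij ω ^ 2)
      have hle : frobSq ((Z ω).W k) ≤ ((min p q : ℕ) : ℝ) * (1 - t) := by
        calc frobSq ((Z ω).W k) ≤ ((min p q : ℕ) : ℝ) * spec ((Z ω).W k) ^ 2 := frobSq_le_min _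
          _ ≤ ((min p q : ℕ) : ℝ) * (1 - t) := by
              apply mul_le_mul_of_nonneg_left hspec2 (by positivity)
      show (∑ ij : Fin p × Fin q, X ij ω ^ 2) ≤ (1 - t) * Fintype.card (Fin p × Fin q) / H
      rw [hfr, hcard]
      have hHne : (H:ℝ) ≠ 0 := by positivity
      calc frobSq ((Z ω).W k) ≤ ((min p q : ℕ) : ℝ) * (1 - t) := hle
        _ = (1 - t) * ((H:ℝ) * ((min p q : ℕ) : ℝ)) / H := by field_simp
    have hmeq : μ {ω | ∑ ij : Fin p × Fin q, X ij ω ^ 2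
          ≤ (1 - t) * Fintype.card (Fin p × Fin q) / H}
        = μ {ω | ∑ ij : Fin p × Fin q, X' ij ω ^ 2
          ≤ (1 - t) * Fintype.card (Fin p × Fin q) / H} := by
      refine measure_congr (Filter.eventuallyEq_set.mpr ?_)
      have hall : ∀ᵐ ω ∂μ, ∀ ij : Fin p × Fin q, X ij ω = X' ij ω :=
        (MeasureTheory.ae_all_iff).mpr fun ij => heqX ij
      filter_upwards [hall] with ω hω
      have : (∑ ij : Fin p × Fin q, X ij ω ^ 2) = ∑ ij : Fin p × Fin q, X' ij ω ^ 2 :=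
        Finset.sum_congr rfl fun ij _ => by rw [hω ij]
      simp only [Set.mem_setOf_eq, this]
    have hexple : Real.exp (-((Fintype.card (Fin p × Fin q) : ℝ) * t ^ 2) / 8) ≤ e := by
      rw [he]
      apply Real.exp_le_exp.mpr
      have hcard2 : (H : ℝ) ≤ (Fintype.card (Fin p × Fin q) : ℝ) := by
        rw [Fintype.card_prod, Fintype.card_fin, Fintype.card_fin]
        exact_mod_cast hdim2
      have ht2 : (0:ℝ) ≤ t ^ 2 := sq_nonneg t
      nlinarith
    calc μ (Bad k) ≤ μ {ω | ∑ ij : Fin p × Fin q, X ij ω ^ 2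
          ≤ (1 - t) * Fintype.card (Fin p × Fin q) / H} := measure_mono hsub
      _ = _ := hmeq
      _ ≤ ENNReal.ofReal (Real.exp (-((Fintype.card (Fin p × Fin q) : ℝ) * t ^ 2) / 8)) := hch
      _ ≤ ENNReal.ofReal e := ENNReal.ofReal_le_ofReal hexple
  -- good events imply the target event
  have hgood : ∀ ω, (∀ k : Fin d, Real.sqrt (1 - t) ≤ spec ((Z ω).W k)) → ω ∈ A := by
    intro ω hω
    have hprod : (Real.sqrt (1 - t)) ^ d ≤ ∏ k, spec ((Z ω).W k) := by
      calc (Real.sqrt (1 - t)) ^ d = ∏ _k : Fin d, Real.sqrt (1 - t) := by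
            rw [Finset.prod_const, Finset.card_univ, Fintype.card_fin]
        _ ≤ ∏ k, spec ((Z ω).W k) :=
            Finset.prod_le_prod (fun _ _ => Real.sqrt_nonneg _) (fun k _ => hω k)
    have hrpow : (1 - t) ^ ((d : ℝ) / 2) = (Real.sqrt (1 - t)) ^ d := by
      rw [Real.sqrt_eq_rpow, ← Real.rpow_natCast ((1-t) ^ ((1:ℝ)/2)) d,
        ← Real.rpow_mul h1t]
      congr 1
      ring
    have h1 : (1 - t) ^ ((d : ℝ) / 2) ≤ ∏ k, spec ((Z ω).W k) := by
      rw [hrpow]; exact hprod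
    refine ⟨h1, ?_⟩
    rw [mul_comm ((1 - t) ^ ((d : ℝ) / 2)) _]
    exact mul_le_mul_of_nonneg_left h1 (by positivity)
  -- union bound
  have hcompl : Aᶜ ⊆ ⋃ k, Bad k := by
    intro ω hω
    by_contra hcon
    simp only [Set.mem_iUnion, not_exists] at hcon
    apply hω
    apply hgood
    intro k
    have := hcon k
    simp only [hBad, Set.mem_setOf_eq, not_lt] at this
    exact this
  have hAc : μ Aᶜ ≤ ENNReal.ofReal (d * e) := by
    calc μ Aᶜ ≤ μ (⋃ k, Bad k) := measure_mono hcompl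
      _ ≤ ∑ k : Fin d, μ (Bad k) := measure_iUnion_fintype_le _ _
      _ ≤ ∑ _k : Fin d, ENNReal.ofReal e := Finset.sum_le_sum fun k _ => hbad k
      _ = ENNReal.ofReal (d * e) := by
          rw [Finset.sum_const, Finset.card_univ, Fintype.card_fin, nsmul_eq_mul,
            ← ENNReal.ofReal_natCast d, ← ENNReal.ofReal_mul (by positivity)]
  by_cases hneg : 1 - 2 * d * e ≤ 0
  · rw [ENNReal.ofReal_eq_zero.mpr hneg]
    exact zero_le
  push_neg at hneg
  have hde : 0 ≤ (d:ℝ) * e := by positivity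
  have hone : (1:ENNReal) ≤ μ A + ENNReal.ofReal (d * e) := by
    calc (1:ENNReal) = μ (A ∪ Aᶜ) := by rw [Set.union_compl_self, measure_univ]
      _ ≤ μ A + μ Aᶜ := measure_union_le _ _
      _ ≤ μ A + ENNReal.ofReal (d * e) := by gcongr
  have htwo : ENNReal.ofReal (1 - 2 * d * e) + ENNReal.ofReal (d * e) ≤ (1:ENNReal) := by
    rw [← ENNReal.ofReal_add (by linarith) hde]
    apply ENNReal.ofReal_le_one.mpr
    linarith
  have h3 : ENNReal.ofReal (1 - 2 * d * e) + ENNReal.ofReal (d * e)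
      ≤ μ A + ENNReal.ofReal (d * e) := le_trans htwo hone
  exact (ENNReal.add_le_add_iff_right ENNReal.ofReal_ne_top).mp h3
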